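/- arXiv:2006.01063 — 4 statements merged into one kernel-verified Lean document; each statement's English description precedes it below -/
import Mathlib

section
/- Let Λ be a full-rank lattice in ℝ^r with fundamental parallelepiped 𝒫 of volume V, and let d be the squared diameter of 𝒫 (the largest squared distance between two of its vertices). If T > 4d, then |(2^r V / Ω_r) · #(Λ ∩ B(½T^{1/2})) − T^{r/2}| ≤ 3^r T^{(r−1)/2} d^{1/2}, where Ω_r = π^{r/2}/Γ(r/2+1) is the volume of the unit ball in ℝ^r and B(R) is the closed ball of radius R centered at the origin. -/
open MeasureTheory Pointwise

private lemma aux_pow_sub_pow {x y : ℝ} (n : ℕ) (hy : 0 ≤ y) (hxy : y ≤ x) :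
    x ^ (n + 1) - y ^ (n + 1) ≤ (n + 1) * x ^ n * (x - y) := by
  induction n with
  | zero => simp
  | succ m ih =>
    have hx : 0 ≤ x := hy.trans hxy
    have h2 : y ^ (m + 1) ≤ x ^ (m + 1) := pow_le_pow_left₀ hy hxy _
    have h3 : x * (x ^ (m + 1) - y ^ (m + 1)) ≤ x * ((m + 1) * x ^ m * (x - y)) :=
      mul_le_mul_of_nonneg_left ih hx
    have h4 : x ^ (m + 2) - y ^ (m + 2)
        = x * (x ^ (m + 1) - y ^ (m + 1)) + (x - y) * y ^ (m + 1) := by ring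
    have h5 : (x - y) * y ^ (m + 1) ≤ (x - y) * x ^ (m + 1) :=
      mul_le_mul_of_nonneg_left h2 (by linarith)
    have h6 : x * ((m + 1) * x ^ m * (x - y)) = (m + 1) * x ^ (m + 1) * (x - y) := by ring
    push_cast
    nlinarith [pow_nonneg hx (m + 1)]

private lemma aux_two_pow (m : ℕ) : 2 ^ (m + 3) ≤ 3 ^ (m + 2) := by
  induction m with
  | zero => norm_num
  | succ k ih =>
    calc 2 ^ (k + 4) = 2 * 2 ^ (k + 3) := by ring
    _ ≤ 2 * 3 ^ (k + 2) := Nat.mul_le_mul_left 2 ih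
    _ ≤ 3 * 3 ^ (k + 2) := Nat.mul_le_mul_right _ (by norm_num)
    _ = 3 ^ (k + 3) := by ring

private lemma aux_mul_two_pow (m : ℕ) : (m + 1) * 2 ^ (m + 1) ≤ 3 ^ (m + 1) := by
  induction m with
  | zero => norm_num
  | succ k ih =>
    match k with
    | 0 => norm_num
    | Nat.succ j =>
      have h := aux_two_pow j
      calc (j + 3) * 2 ^ (j + 3) = 2 * ((j + 2) * 2 ^ (j + 2)) + 2 ^ (j + 3) := by ring
      _ ≤ 2 * 3 ^ (j + 2) + 3 ^ (j + 2) := Nat.add_le_add (Nat.mul_le_mul_left 2 ih) h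
      _ = 3 ^ (j + 3) := by ring

/-- Let `Λ ⊂ ℝ^r` be a full-rank lattice with fundamental parallelepiped `𝒫`
of volume `V`, and let `d` be the largest squared distance between two of the
vertices of `𝒫`.  If `T > 4d`, then
`|(2^r V / Ω_r) · #(Λ ∩ B(½√T)) − T^{r/2}| ≤ 3^r T^{(r−1)/2} √d`,
where `Ω_r = π^{r/2}/Γ(r/2+1)` is the volume of the unit ball of `ℝ^r` and
`B(R)` is the closed ball of radius `R` about the origin. -/
theorem stmt_0 (r : ℕ) (hr : 1 ≤ r)
    (b : Module.Basis (Fin r) ℝ (EuclideanSpace ℝ (Fin r)))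
    (V d T : ℝ)
    (hV : V = (volume (parallelepiped ⇑b)).toReal)
    (hd_ub : ∀ δ : Fin r → ℤ, (∀ i, δ i = -1 ∨ δ i = 0 ∨ δ i = 1) →
      ‖∑ i, (δ i : ℝ) • b i‖ ^ 2 ≤ d)
    (hd_mem : ∃ δ : Fin r → ℤ, (∀ i, δ i = -1 ∨ δ i = 0 ∨ δ i = 1) ∧
      ‖∑ i, (δ i : ℝ) • b i‖ ^ 2 = d)
    (hT : 4 * d < T) :
    |(2 ^ r * V / (Real.pi ^ ((r : ℝ) / 2) / Real.Gamma ((r : ℝ) / 2 + 1))) *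
        (((Submodule.span ℤ (Set.range ⇑b) : Submodule ℤ (EuclideanSpace ℝ (Fin r))) :
            Set (EuclideanSpace ℝ (Fin r))) ∩
          Metric.closedBall 0 (Real.sqrt T / 2)).ncard -
        T ^ ((r : ℝ) / 2)| ≤
      3 ^ r * T ^ (((r : ℝ) - 1) / 2) * Real.sqrt d := by
  classical
  haveI : Nonempty (Fin r) := ⟨⟨0, hr⟩⟩
  set E := EuclideanSpace ℝ (Fin r) with hE
  set L := (Submodule.span ℤ (Set.range ⇑b) : Submodule ℤ E) with hL
  set F := ZSpan.fundamentalDomain b with hF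
  -- basic positivity facts
  have hd0 : 0 ≤ d := by
    have h := hd_ub (fun _ => 0) (fun i => Or.inr (Or.inl rfl))
    simpa using h
  have hT0 : 0 < T := lt_of_le_of_lt (by linarith) hT
  set u := Real.sqrt T with hu
  have hu0 : 0 < u := Real.sqrt_pos.mpr hT0
  set D := Real.sqrt d with hD
  have hD0 : 0 ≤ D := Real.sqrt_nonneg d
  have h2D : 2 * D ≤ u := by
    have h := Real.sqrt_le_sqrt hT.le
    rwa [show (4 : ℝ) * d = 2 ^ 2 * d by ring,
      Real.sqrt_mul (by positivity) d, Real.sqrt_sq (by norm_num)] at h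
  -- the parallelepiped is contained in the ball of radius D
  have hP_sub : parallelepiped ⇑b ⊆ Metric.closedBall 0 D := by
    rw [parallelepiped_eq_convexHull]
    refine convexHull_min ?_ (convex_closedBall 0 D)
    intro x hx
    rw [Set.mem_fintype_sum] at hx
    obtain ⟨g, hg, hgx⟩ := hx
    set δ : Fin r → ℤ := fun i => if g i = (0 : E) then 0 else 1 with hδ
    have hδx : x = ∑ i, (δ i : ℝ) • b i := by
      rw [← hgx]
      refine Finset.sum_congr rfl fun i _ => ?_
      by_cases h0 : g i = 0
      · simp [hδ, h0]
      · have : g i = b i := by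
          rcases hg i with h | h
          · exact absurd h h0
          · simpa using h
        simp only [hδ, if_neg h0]
        rw [this]
        norm_num
    have hnx : ‖x‖ ^ 2 ≤ d := by
      rw [hδx]
      exact hd_ub δ fun i => by by_cases h0 : g i = 0 <;> simp [hδ, h0]
    rw [mem_closedBall_zero_iff, hD]
    exact (Real.le_sqrt (norm_nonneg x) hd0).mpr hnx
  have hF_sub : F ⊆ Metric.closedBall 0 D :=
    (ZSpan.fundamentalDomain_subset_parallelepiped b).trans hP_sub
  -- the set of lattice points is finite
  set S : Set E := (L : Set E) ∩ Metric.closedBall 0 (u / 2) with hS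
  have hSfin : S.Finite := by
    rw [hS, Set.inter_comm]
    haveI : DiscreteTopology ((L : Set E) : Type _) := inferInstanceAs (DiscreteTopology L)
    exact Metric.finite_isBounded_inter_isClosed (isDiscrete_iff_discreteTopology.mpr this) Metric.isBounded_closedBall
      (AddSubgroup.isClosed_of_discrete (H := L.toAddSubgroup))
  set s : Finset E := hSfin.toFinset with hs
  have hmem_s : ∀ x : E, x ∈ s ↔ x ∈ L ∧ ‖x‖ ≤ u / 2 := by
    intro x
    rw [hs, Set.Finite.mem_toFinset, hS]
    simp [mem_closedBall_zero_iff]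
  -- the union of translates
  set U : Set E := ⋃ x ∈ s, x +ᵥ F with hU
  have hdisj : (s : Set E).PairwiseDisjoint (fun x => x +ᵥ F) := by
    intro x hx y hy hxy
    have hxL : x ∈ L := ((hmem_s x).1 (Finset.mem_coe.1 hx)).1
    have hyL : y ∈ L := ((hmem_s y).1 (Finset.mem_coe.1 hy)).1
    rw [Function.onFun, Set.disjoint_left]
    intro z hzx hzy
    obtain ⟨v, -, huniq⟩ := ZSpan.exist_unique_vadd_mem_fundamentalDomain b z
    have h1 : (⟨-x, neg_mem hxL⟩ : L) = v := by
      refine huniq _ ?_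
      rw [Set.mem_vadd_set_iff_neg_vadd_mem] at hzx
      exact hzx
    have h2 : (⟨-y, neg_mem hyL⟩ : L) = v := by
      refine huniq _ ?_
      rw [Set.mem_vadd_set_iff_neg_vadd_mem] at hzy
      exact hzy
    apply hxy
    have := h1.trans h2.symm
    have h3 : -x = -y := congrArg Subtype.val this
    exact neg_injective h3
  have hmeasF : MeasurableSet F := ZSpan.fundamentalDomain_measurableSet b
  have hvolU : volume U = (s.card : ENNReal) * volume F := by
    rw [hU, measure_biUnion_finset hdisj (fun x _ => hmeasF.const_vadd x)]
    simp_rw [measure_vadd]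
    rw [Finset.sum_const, nsmul_eq_mul]
  -- sandwiching the union between two balls
  have hsub1 : U ⊆ Metric.closedBall 0 (u / 2 + D) := by
    intro z hz
    simp only [hU, Set.mem_iUnion, exists_prop] at hz
    obtain ⟨x, hx, hzx⟩ := hz
    obtain ⟨f, hf, rfl⟩ := hzx
    have hx' : ‖x‖ ≤ u / 2 := ((hmem_s x).1 hx).2
    have hf' : ‖f‖ ≤ D := mem_closedBall_zero_iff.1 (hF_sub hf)
    rw [mem_closedBall_zero_iff]
    calc ‖x +ᵥ f‖ = ‖x + f‖ := rfl
    _ ≤ ‖x‖ + ‖f‖ := norm_add_le _ _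
    _ ≤ u / 2 + D := add_le_add hx' hf'
  have hsub2 : Metric.closedBall 0 (u / 2 - D) ⊆ U := by
    intro y hy
    obtain ⟨v, hv, -⟩ := ZSpan.exist_unique_vadd_mem_fundamentalDomain b y
    have hyn : ‖y‖ ≤ u / 2 - D := mem_closedBall_zero_iff.1 hy
    have hfn : ‖(v : E) + y‖ ≤ D := mem_closedBall_zero_iff.1 (hF_sub hv)
    have hxL : -(v : E) ∈ L := neg_mem v.2
    have hxn : ‖-(v : E)‖ ≤ u / 2 := by
      have hvy : ((v : E) + y) - y = (v : E) := add_sub_cancel_right _ _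
      calc ‖-(v : E)‖ = ‖(v : E)‖ := norm_neg _
      _ = ‖((v : E) + y) - y‖ := by rw [hvy]
      _ ≤ ‖(v : E) + y‖ + ‖y‖ := norm_sub_le _ _
      _ ≤ D + (u / 2 - D) := add_le_add hfn hyn
      _ = u / 2 := by ring
    have hxs : -(v : E) ∈ s := (hmem_s _).2 ⟨hxL, hxn⟩
    refine Set.mem_biUnion hxs ?_
    rw [Set.mem_vadd_set_iff_neg_vadd_mem]
    have : -(-(v : E)) +ᵥ y = (v : E) + y := by
      rw [neg_neg]; rfl
    rw [this]
    exact hv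
  -- volumes
  have hPfin : volume (parallelepiped ⇑b) ≠ ⊤ :=
    ((measure_mono hP_sub).trans_lt measure_closedBall_lt_top).ne
  have hVF : volume F = ENNReal.ofReal V := by
    rw [measure_congr (ZSpan.fundamentalDomain_ae_parallelepiped b volume), hV,
      ENNReal.ofReal_toReal hPfin]
  have hV0 : 0 < V := by
    rw [hV]
    refine ENNReal.toReal_pos ?_ hPfin
    rw [← measure_congr (ZSpan.fundamentalDomain_ae_parallelepiped b volume)]
    exact ZSpan.measure_fundamentalDomain_ne_zero b
  set Ω : ℝ := Real.sqrt Real.pi ^ r / Real.Gamma ((r : ℝ) / 2 + 1) with hΩ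
  have hΩ0 : 0 < Ω :=
    div_pos (pow_pos (Real.sqrt_pos.mpr Real.pi_pos) r)
      (Real.Gamma_pos_of_pos (by positivity))
  have hball : ∀ ρ : ℝ, 0 ≤ ρ →
      volume (Metric.closedBall (0 : E) ρ) = ENNReal.ofReal (ρ ^ r * Ω) := by
    intro ρ hρ
    have hb := EuclideanSpace.volume_closedBall (ι := Fin r) 0 ρ
    simp only [Fintype.card_fin] at hb
    rw [show Metric.closedBall (0 : E) ρ = Metric.closedBall (0 : EuclideanSpace ℝ (Fin r)) ρ from rfl,
      hb, ← ENNReal.ofReal_pow hρ, ← ENNReal.ofReal_mul (by positivity), hΩ]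
  -- the two key real inequalities
  have hρ1 : (0 : ℝ) ≤ u / 2 - D := by linarith
  have hρ2 : (0 : ℝ) ≤ u / 2 + D := by linarith
  have hcV : ((s.card : ENNReal) * volume F) = ENNReal.ofReal ((s.card : ℝ) * V) := by
    rw [hVF, ← ENNReal.ofReal_natCast s.card, ← ENNReal.ofReal_mul (Nat.cast_nonneg _)]
  have key1 : (u / 2 - D) ^ r * Ω ≤ (s.card : ℝ) * V := by
    have h := (measure_mono hsub2).trans_eq hvolU
    rw [hball _ hρ1, hcV] at h
    exact (ENNReal.ofReal_le_ofReal_iff (mul_nonneg (Nat.cast_nonneg _) hV0.le)).1 h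
  have key2 : (s.card : ℝ) * V ≤ (u / 2 + D) ^ r * Ω := by
    have h := (hvolU.symm.trans_le (measure_mono hsub1))
    rw [hball _ hρ2, hcV] at h
    exact (ENNReal.ofReal_le_ofReal_iff (mul_nonneg (pow_nonneg hρ2 r) hΩ0.le)).1 h
  -- rewrite the goal
  have hπ : Real.pi ^ ((r : ℝ) / 2) = Real.sqrt Real.pi ^ r := by
    rw [Real.sqrt_eq_rpow, ← Real.rpow_natCast (Real.pi ^ ((1 : ℝ) / 2)) r,
      ← Real.rpow_mul Real.pi_pos.le]
    congr 1
    ring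
  have hNcard : S.ncard = s.card := Set.ncard_eq_toFinset_card S hSfin
  have hTpow : T ^ ((r : ℝ) / 2) = u ^ r := by
    rw [hu, Real.sqrt_eq_rpow, ← Real.rpow_natCast (T ^ ((1 : ℝ) / 2)) r,
      ← Real.rpow_mul hT0.le]
    congr 1
    ring
  have hTpow' : T ^ (((r : ℝ) - 1) / 2) = u ^ (r - 1) := by
    rw [hu, Real.sqrt_eq_rpow, ← Real.rpow_natCast (T ^ ((1 : ℝ) / 2)) (r - 1),
      ← Real.rpow_mul hT0.le]
    congr 1
    rw [Nat.cast_sub hr]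
    push_cast
    ring
  obtain ⟨m, rfl⟩ : ∃ m, r = m + 1 := ⟨r - 1, (Nat.succ_pred_eq_of_pos hr).symm⟩
  set N : ℝ := ((s.card : ℝ)) with hN
  have hN0 : 0 ≤ N := Nat.cast_nonneg _
  set X : ℝ := 2 ^ (m + 1) * V / Ω * N with hX
  have hgoal_eq : (2 ^ (m + 1) * V /
      (Real.pi ^ (((m + 1 : ℕ) : ℝ) / 2) / Real.Gamma (((m + 1 : ℕ) : ℝ) / 2 + 1))) *
      (S.ncard : ℝ) = X := by
    rw [hπ, hNcard, hX, hN]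
  have hXlb : (u - 2 * D) ^ (m + 1) ≤ X := by
    rw [hX, div_mul_eq_mul_div, le_div_iff₀ hΩ0]
    have he : (u - 2 * D) ^ (m + 1) = 2 ^ (m + 1) * (u / 2 - D) ^ (m + 1) := by
      rw [← mul_pow]
      congr 1
      ring
    rw [he]
    calc 2 ^ (m + 1) * (u / 2 - D) ^ (m + 1) * Ω
        = 2 ^ (m + 1) * ((u / 2 - D) ^ (m + 1) * Ω) := by ring
    _ ≤ 2 ^ (m + 1) * (N * V) := by
        exact mul_le_mul_of_nonneg_left key1 (by positivity)
    _ = 2 ^ (m + 1) * V * N := by ring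
  have hXub : X ≤ (u + 2 * D) ^ (m + 1) := by
    rw [hX, div_mul_eq_mul_div, div_le_iff₀ hΩ0]
    have he : (u + 2 * D) ^ (m + 1) = 2 ^ (m + 1) * (u / 2 + D) ^ (m + 1) := by
      rw [← mul_pow]
      congr 1
      ring
    rw [he]
    calc 2 ^ (m + 1) * V * N = 2 ^ (m + 1) * (N * V) := by ring
    _ ≤ 2 ^ (m + 1) * ((u / 2 + D) ^ (m + 1) * Ω) :=
        mul_le_mul_of_nonneg_left key2 (by positivity)
    _ = 2 ^ (m + 1) * (u / 2 + D) ^ (m + 1) * Ω := by ring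
  -- the final numeric estimate
  rw [hgoal_eq, hTpow, hTpow']
  simp only [Nat.add_sub_cancel]
  have hle1 : (u + 2 * D) ^ (m + 1) - u ^ (m + 1) ≤ 3 ^ (m + 1) * u ^ m * D := by
    have h1 : (u + 2 * D) ^ (m + 1) - u ^ (m + 1)
        ≤ ((m : ℝ) + 1) * (u + 2 * D) ^ m * (u + 2 * D - u) := by
      have := aux_pow_sub_pow (x := u + 2 * D) (y := u) m hu0.le (by linarith)
      push_cast at this
      convert this using 2
    have hpow : (u + 2 * D) ^ m ≤ (2 * u) ^ m :=
      pow_le_pow_left₀ (by linarith) (by linarith) m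
    have hm1 : (0 : ℝ) ≤ (m : ℝ) + 1 := by positivity
    have h2 : ((m : ℝ) + 1) * (u + 2 * D) ^ m * (2 * D)
        ≤ ((m : ℝ) + 1) * (2 * u) ^ m * (2 * D) :=
      mul_le_mul_of_nonneg_right (mul_le_mul_of_nonneg_left hpow hm1) (by linarith)
    have h5 : (((m + 1) * 2 ^ (m + 1) : ℕ) : ℝ) ≤ ((3 ^ (m + 1) : ℕ) : ℝ) :=
      Nat.cast_le.mpr (aux_mul_two_pow m)
    have h6 : (((m + 1) * 2 ^ (m + 1) : ℕ) : ℝ) * (u ^ m * D)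
        ≤ ((3 ^ (m + 1) : ℕ) : ℝ) * (u ^ m * D) :=
      mul_le_mul_of_nonneg_right h5 (by positivity)
    calc (u + 2 * D) ^ (m + 1) - u ^ (m + 1)
        ≤ ((m : ℝ) + 1) * (u + 2 * D) ^ m * (u + 2 * D - u) := h1
    _ = ((m : ℝ) + 1) * (u + 2 * D) ^ m * (2 * D) := by ring
    _ ≤ ((m : ℝ) + 1) * (2 * u) ^ m * (2 * D) := h2
    _ = (((m + 1) * 2 ^ (m + 1) : ℕ) : ℝ) * (u ^ m * D) := by
        push_cast
        rw [mul_pow]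
        ring
    _ ≤ ((3 ^ (m + 1) : ℕ) : ℝ) * (u ^ m * D) := h6
    _ = 3 ^ (m + 1) * u ^ m * D := by push_cast; ring
  have hle2 : u ^ (m + 1) - (u - 2 * D) ^ (m + 1) ≤ 3 ^ (m + 1) * u ^ m * D := by
    have h1 : u ^ (m + 1) - (u - 2 * D) ^ (m + 1)
        ≤ ((m : ℝ) + 1) * u ^ m * (u - (u - 2 * D)) := by
      have := aux_pow_sub_pow (x := u) (y := u - 2 * D) m (by linarith) (by linarith)
      push_cast at this
      convert this using 2
    have h3 : 2 * ((m : ℝ) + 1) ≤ 3 ^ (m + 1) := by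
      have h4 : ((2 * (m + 1) : ℕ) : ℝ) ≤ ((3 ^ (m + 1) : ℕ) : ℝ) := by
        refine Nat.cast_le.mpr ?_
        calc 2 * (m + 1) = (m + 1) * 2 := by ring
        _ ≤ (m + 1) * 2 ^ (m + 1) := Nat.mul_le_mul_left _ (by
              calc 2 = 2 ^ 1 := rfl
              _ ≤ 2 ^ (m + 1) := Nat.pow_le_pow_right (by norm_num) (by omega))
        _ ≤ 3 ^ (m + 1) := aux_mul_two_pow m
      push_cast at h4
      linarith
    calc u ^ (m + 1) - (u - 2 * D) ^ (m + 1)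
        ≤ ((m : ℝ) + 1) * u ^ m * (u - (u - 2 * D)) := h1
    _ = (2 * ((m : ℝ) + 1)) * (u ^ m * D) := by ring
    _ ≤ (3 ^ (m + 1) : ℝ) * (u ^ m * D) := mul_le_mul_of_nonneg_right h3 (by positivity)
    _ = 3 ^ (m + 1) * u ^ m * D := by ring
  have hmid1 : (u - 2 * D) ^ (m + 1) ≤ u ^ (m + 1) :=
    pow_le_pow_left₀ (by linarith) (by linarith) _
  have hmid2 : u ^ (m + 1) ≤ (u + 2 * D) ^ (m + 1) :=
    pow_le_pow_left₀ (by linarith) (by linarith) _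
  rw [abs_sub_le_iff]
  constructor
  · linarith
  · linarith
end

section
/- Let a, m be integers with 3 ∤ am. The number of solutions n mod 3 to a n^6 ≡ m^3 (mod 3) equals 2 if a^{-1}m is a quadratic residue mod 3 (i.e., am ≡ 1 mod 3) and 0 otherwise; for α ≥ 2, the number of solutions n mod 3^α equals 6 if am ≡ 1 (mod 3) and a^{-1} is a cubic residue modulo 9, and 0 otherwise. -/
/-- `ρ_m^{(a)}(M)` : the number of residue classes `n` modulo `M`
with `a n^6 ≡ m^3 (mod M)`. -/
noncomputable def rhoCount (a m : ℤ) (M : ℕ) : ℕ :=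
  Nat.card {n : ZMod M // (a : ZMod M) * n ^ 6 = (m : ZMod M) ^ 3}

namespace Stmt4Aux

lemma four_pow_three_pow (k : ℕ) :
    ∃ c : ℤ, ¬ (3:ℤ) ∣ c ∧ (4:ℤ) ^ (3 ^ k) = 1 + 3 ^ (k+1) * c := by
  induction k with
  | zero => exact ⟨1, by norm_num⟩
  | succ k ih =>
    obtain ⟨c, hc, h⟩ := ih
    refine ⟨c + 3 * (3 ^ k * c ^ 2 + 3 ^ (2*k) * c ^ 3), fun h3 => hc (by omega), ?_⟩
    have h2 : (4:ℤ) ^ 3 ^ (k+1) = ((4:ℤ) ^ 3 ^ k) ^ 3 := by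
      rw [← pow_mul, pow_succ]
    rw [h2, h]; ring

lemma isUnit_intCast_zmod (x : ℤ) (hx : ¬ (3:ℤ) ∣ x) {n : ℕ} {k : ℕ} (hn : (n:ℤ) = 3 ^ k) :
    IsUnit (x : ZMod n) := by
  have hcop : IsCoprime (3:ℤ) x := (Int.prime_three.coprime_iff_not_dvd).mpr hx
  have hcop2 : IsCoprime ((n:ℤ)) x := by rw [hn]; exact hcop.pow_left
  obtain ⟨u, v, huv⟩ := hcop2
  refine IsUnit.of_mul_eq_one ((v : ℤ) : ZMod n) ?_
  have := congrArg (fun t : ℤ => (t : ZMod n)) huv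
  push_cast at this
  rw [ZMod.natCast_self] at this
  simpa [mul_comm] using this


section

variable (β : ℕ)

local instance : NeZero (3 ^ (β + 2) : ℕ) := ⟨by positivity⟩

/-- `4` as a unit of `ZMod (3^(β+2))`. -/
noncomputable def u4 : (ZMod (3 ^ (β + 2)))ˣ :=
  (isUnit_intCast_zmod 4 (by norm_num) (by push_cast; rfl : ((3^(β+2) : ℕ) : ℤ) = 3 ^ (β+2))).unit

lemma u4_val : ((u4 β : (ZMod (3 ^ (β + 2)))ˣ) : ZMod (3 ^ (β + 2))) = 4 := by
  simp only [u4, IsUnit.unit_spec]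
  push_cast
  rfl

lemma four_pow_card : (4 : ZMod (3 ^ (β + 2))) ^ (3 ^ (β + 1)) = 1 := by
  obtain ⟨c, hc, h4⟩ := four_pow_three_pow (β + 1)
  have := congrArg (fun t : ℤ => (t : ZMod (3 ^ (β + 2)))) h4
  push_cast at this
  rw [show ((3 : ZMod (3^(β+2))) ^ (β+2)) = ((3^(β+2) : ℕ) : ZMod (3^(β+2))) by push_cast; ring,
    ZMod.natCast_self] at this
  simpa using this

lemma orderOf_u4 : orderOf (u4 β) = 3 ^ (β + 1) := by
  haveI : Fact (Nat.Prime 3) := ⟨Nat.prime_three⟩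
  apply orderOf_eq_prime_pow
  · intro h
    obtain ⟨c, hc, h4⟩ := four_pow_three_pow β
    have hval : ((4 : ZMod (3 ^ (β + 2))) ^ 3 ^ β) = 1 := by
      have := congrArg (Units.val) h
      simpa [u4_val] using this
    have h1 : (((4:ℤ) ^ 3 ^ β : ℤ) : ZMod (3 ^ (β + 2))) = 1 := by push_cast; simpa using hval
    rw [h4] at h1
    have h0 : ((3 ^ (β+1) * c : ℤ) : ZMod (3 ^ (β + 2))) = 0 := by
      push_cast at h1 ⊢
      linear_combination h1
    rw [ZMod.intCast_zmod_eq_zero_iff_dvd] at h0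
    push_cast at h0
    rw [pow_succ] at h0
    have : (3:ℤ) ∣ c := by
      exact (mul_dvd_mul_iff_left (by positivity : ((3:ℤ)^(β+1)) ≠ 0)).mp h0
    exact hc this
  · ext
    push_cast [u4_val]
    exact four_pow_card β

lemma pow_mod_aux {M : Type*} [CommMonoid M] (x : M) {n : ℕ} (h : x ^ n = 1) (j : ℕ) :
    x ^ j = x ^ (j % n) := by
  conv_lhs => rw [← Nat.div_add_mod j n]
  rw [pow_add, pow_mul, h, one_pow, one_mul]

lemma pow_four_mod (j : ℕ) :
    (4 : ZMod (3 ^ (β + 2))) ^ j = 4 ^ (j % 3 ^ (β + 1)) :=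
  pow_mod_aux _ (four_pow_card β) j

/-- the projection to `ZMod 3`. -/
def pi3 : ZMod (3 ^ (β + 2)) →+* ZMod 3 :=
  ZMod.castHom (dvd_pow_self 3 (by omega)) (ZMod 3)

lemma pi3_four : pi3 β (4 : ZMod (3 ^ (β + 2))) = 1 := by
  have : ((4:ℕ) : ZMod (3^(β+2))) = 4 := by push_cast; rfl
  rw [← this, map_natCast]
  decide

lemma neg_one_pow_modtwo {R : Type*} [Monoid R] [HasDistribNeg R] {e e' : ℕ}
    (h : e % 2 = e' % 2) : ((-1 : R)) ^ e = (-1) ^ e' := by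
  rcases Nat.even_or_odd e with he | he <;> rcases Nat.even_or_odd e' with he2 | he2 <;>
    simp only [Even.neg_one_pow, Odd.neg_one_pow, *] <;>
    (rw [Nat.even_iff] at * <;> rw [Nat.odd_iff] at * <;> omega)

lemma repr_eq_iff (e k e' k' : ℕ) :
    ((-1 : ZMod (3 ^ (β + 2))) ^ e * 4 ^ k = (-1) ^ e' * 4 ^ k') ↔
      (e % 2 = e' % 2 ∧ k % 3 ^ (β + 1) = k' % 3 ^ (β + 1)) := by
  constructor
  · intro h
    have hsign : ((-1 : ZMod 3)) ^ e = (-1) ^ e' := by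
      have := congrArg (pi3 β) h
      simpa [map_mul, map_pow, pi3_four] using this
    have he : e % 2 = e' % 2 := by
      rcases Nat.even_or_odd e with he1 | he1 <;> rcases Nat.even_or_odd e' with he2 | he2
      · rw [Nat.even_iff] at he1 he2; omega
      · exfalso; rw [he1.neg_one_pow, he2.neg_one_pow] at hsign; revert hsign; decide
      · exfalso; rw [he1.neg_one_pow, he2.neg_one_pow] at hsign; revert hsign; decide
      · rw [Nat.odd_iff] at he1 he2; omega
    refine ⟨he, ?_⟩
    have h4 : (4 : ZMod (3 ^ (β + 2))) ^ k = 4 ^ k' := by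
      have hcan : ((-1 : ZMod (3 ^ (β + 2)))) ^ e = (-1) ^ e' := neg_one_pow_modtwo he
      rcases Nat.even_or_odd e with he1 | he1
      · rw [he1.neg_one_pow] at h hcan
        rw [← hcan] at h
        simpa using h
      · rw [he1.neg_one_pow] at h hcan
        rw [← hcan] at h
        simpa [neg_mul] using h
    have hu : (u4 β) ^ k = (u4 β) ^ k' := by
      apply Units.ext
      simpa [u4_val] using h4
    rw [pow_eq_pow_iff_modEq, orderOf_u4] at hu
    exact hu
  · rintro ⟨he, hk⟩
    rw [neg_one_pow_modtwo he, pow_four_mod β k, pow_four_mod β k', hk]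
local instance : NeZero (3 ^ (β + 1) : ℕ) := ⟨by positivity⟩

lemma exists_repr (x : ZMod (3 ^ (β + 2))) (hx : IsUnit x) :
    ∃ e k : ℕ, e < 2 ∧ k < 3 ^ (β + 1) ∧ x = (-1) ^ e * 4 ^ k := by
  classical
  set F : ZMod 2 × ZMod (3 ^ (β + 1)) → (ZMod (3 ^ (β + 2)))ˣ :=
    fun p => (-1 : (ZMod (3 ^ (β + 2)))ˣ) ^ p.1.val * (u4 β) ^ p.2.val with hF
  have hval : ∀ p : ZMod 2 × ZMod (3 ^ (β + 1)),
      ((F p : (ZMod (3 ^ (β + 2)))ˣ) : ZMod (3 ^ (β + 2))) = (-1) ^ p.1.val * 4 ^ p.2.val := by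
    intro p
    simp [hF, u4_val]
  have hinj : Function.Injective F := by
    intro p q hpq
    have : ((-1 : ZMod (3 ^ (β + 2)))) ^ p.1.val * 4 ^ p.2.val
        = (-1) ^ q.1.val * 4 ^ q.2.val := by
      rw [← hval p, ← hval q, hpq]
    rw [repr_eq_iff] at this
    obtain ⟨h1, h2⟩ := this
    have hp1 := ZMod.val_lt p.1
    have hq1 := ZMod.val_lt q.1
    have hp2 := ZMod.val_lt p.2
    have hq2 := ZMod.val_lt q.2
    have e1 : p.1 = q.1 := ZMod.val_injective _ (by omega)
    have e2 : p.2 = q.2 := ZMod.val_injective _ (by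
      rw [Nat.mod_eq_of_lt hp2, Nat.mod_eq_of_lt hq2] at h2; exact h2)
    exact Prod.ext e1 e2
  have hcard : Fintype.card (ZMod 2 × ZMod (3 ^ (β + 1)))
      = Fintype.card (ZMod (3 ^ (β + 2)))ˣ := by
    rw [Fintype.card_prod, ZMod.card, ZMod.card, ZMod.card_units_eq_totient,
      Nat.totient_prime_pow Nat.prime_three (by omega)]
    rw [show β + 2 - 1 = β + 1 from rfl]
    ring
  have hbij : Function.Bijective F :=
    (Fintype.bijective_iff_injective_and_card F).mpr ⟨hinj, hcard⟩
  obtain ⟨p, hp⟩ := hbij.surjective hx.unit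
  refine ⟨p.1.val, p.2.val, ZMod.val_lt p.1, ZMod.val_lt p.2, ?_⟩
  rw [← hx.unit_spec, ← hp, hval]

lemma card_sixth_roots :
    Nat.card {z : ZMod (3 ^ (β + 2)) // z ^ 6 = 1} = 6 := by
  have hpow : ∀ (e j : ℕ), ((-1 : ZMod (3 ^ (β + 2))) ^ e * 4 ^ (j * 3 ^ β)) ^ 6 = 1 := by
    intro e j
    have h1 : e * 6 = 2 * (3 * e) := by ring
    have h2 : j * 3 ^ β * 6 = 3 ^ (β + 1) * (2 * j) := by rw [pow_succ]; ring
    have hs : ((-1 : ZMod (3 ^ (β + 2))) ^ e) ^ 6 = 1 := by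
      rw [← pow_mul, h1, pow_mul, neg_one_sq, one_pow]
    rw [mul_pow, hs, one_mul, ← pow_mul, h2, pow_mul, four_pow_card, one_pow]
  set g : Fin 2 × Fin 3 → {z : ZMod (3 ^ (β + 2)) // z ^ 6 = 1} :=
    fun p => ⟨(-1) ^ (p.1 : ℕ) * 4 ^ ((p.2 : ℕ) * 3 ^ β), hpow _ _⟩ with hg
  have h3pos : 0 < 3 ^ β := by positivity
  have hbij : Function.Bijective g := by
    constructor
    · intro p q h
      have hv := congrArg Subtype.val h
      simp only [hg] at hv
      rw [repr_eq_iff] at hv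
      obtain ⟨h1, h2⟩ := hv
      have hp1 : (p.1 : ℕ) < 2 := p.1.isLt
      have hq1 : (q.1 : ℕ) < 2 := q.1.isLt
      have hp2 : (p.2 : ℕ) * 3 ^ β < 3 ^ (β + 1) := by
        rw [pow_succ']
        exact Nat.mul_lt_mul_of_lt_of_le p.2.isLt le_rfl h3pos
      have hq2 : (q.2 : ℕ) * 3 ^ β < 3 ^ (β + 1) := by
        rw [pow_succ']
        exact Nat.mul_lt_mul_of_lt_of_le q.2.isLt le_rfl h3pos
      rw [Nat.mod_eq_of_lt hp2, Nat.mod_eq_of_lt hq2] at h2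
      have e2 : (p.2 : ℕ) = (q.2 : ℕ) := Nat.eq_of_mul_eq_mul_right h3pos h2
      have e1 : (p.1 : ℕ) = (q.1 : ℕ) := by omega
      exact Prod.ext (Fin.ext e1) (Fin.ext e2)
    · rintro ⟨z, hz⟩
      have hzu : IsUnit z := IsUnit.of_mul_eq_one (z ^ 5) (by rw [← pow_succ']; exact hz)
      obtain ⟨e, k, he, hk, hrep⟩ := exists_repr β z hzu
      have hsq : ((-1 : ZMod (3 ^ (β + 2))) ^ e) ^ 6 = 1 := by
        rw [← pow_mul, show e * 6 = 2 * (e * 3) by ring, pow_mul, neg_one_sq, one_pow]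
      have hz6 : ((-1 : ZMod (3 ^ (β + 2)))) ^ 0 * 4 ^ (k * 6)
          = (-1 : ZMod (3 ^ (β + 2))) ^ 0 * 4 ^ 0 := by
        have h1 : ((-1 : ZMod (3 ^ (β + 2))) ^ e * 4 ^ k) ^ 6 = 1 := by rw [← hrep]; exact hz
        rw [mul_pow, hsq, one_mul, ← pow_mul] at h1
        simpa using h1
      rw [repr_eq_iff] at hz6
      obtain ⟨-, hmod⟩ := hz6
      have hdvd6 : 3 ^ (β + 1) ∣ k * 6 := Nat.dvd_of_mod_eq_zero (by simpa using hmod)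
      have hco : Nat.Coprime (3 ^ (β + 1)) 2 := Nat.Coprime.pow_left _ (by decide)
      have hdvd3 : 3 ^ (β + 1) ∣ 3 * k := by
        refine hco.dvd_of_dvd_mul_right ?_
        rwa [show 3 * k * 2 = k * 6 by ring]
      have hdvdk : 3 ^ β ∣ k := by
        rw [pow_succ'] at hdvd3
        exact (mul_dvd_mul_iff_left (by norm_num : (3:ℕ) ≠ 0)).mp hdvd3
      obtain ⟨t, ht⟩ := hdvdk
      refine ⟨(⟨e, he⟩, ⟨t % 3, Nat.mod_lt _ (by norm_num)⟩), ?_⟩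
      apply Subtype.ext
      simp only [hg, Fin.val_mk]
      rw [hrep]
      apply (repr_eq_iff β _ _ _ _).mpr
      refine ⟨rfl, ?_⟩
      have hme : t % 3 * 3 ^ β ≡ t * 3 ^ β [MOD 3 * 3 ^ β] := (Nat.mod_modEq t 3).mul_right' _
      rw [pow_succ', ht]
      calc (t % 3 * 3 ^ β) % (3 * 3 ^ β) = (t * 3 ^ β) % (3 * 3 ^ β) := hme
        _ = (3 ^ β * t) % (3 * 3 ^ β) := by rw [mul_comm t]
  rw [Nat.card_eq_of_bijective _ hbij |>.symm]
  simp

lemma card_solutions_eq_six (A C : ZMod (3 ^ (β + 2))) (hA : IsUnit A) (hC : IsUnit C)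
    (hsol : ∃ n, A * n ^ 6 = C) :
    Nat.card {n : ZMod (3 ^ (β + 2)) // A * n ^ 6 = C} = 6 := by
  obtain ⟨n0, h0⟩ := hsol
  have hn0 : IsUnit n0 := by
    have : IsUnit (A * n0 ^ 6) := h0 ▸ hC
    exact (isUnit_pow_iff (by norm_num : (6:ℕ) ≠ 0)).mp (isUnit_of_mul_isUnit_right this)
  have hinv : n0 * n0⁻¹ = 1 := ZMod.mul_inv_of_unit n0 hn0
  have hinv' : n0⁻¹ * n0 = 1 := ZMod.inv_mul_of_unit n0 hn0
  have hEquiv : {n : ZMod (3 ^ (β + 2)) // A * n ^ 6 = C} ≃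
      {z : ZMod (3 ^ (β + 2)) // z ^ 6 = 1} :=
    { toFun := fun n => ⟨n.1 * n0⁻¹, by
        have hn6 : (n.1 : ZMod (3 ^ (β + 2))) ^ 6 = n0 ^ 6 :=
          hA.mul_left_cancel (by rw [n.2, h0])
        calc (n.1 * n0⁻¹) ^ 6 = n.1 ^ 6 * (n0⁻¹) ^ 6 := mul_pow _ _ _
          _ = (n0 * n0⁻¹) ^ 6 := by rw [hn6, mul_pow]
          _ = 1 := by rw [hinv, one_pow]⟩
      invFun := fun z => ⟨z.1 * n0, by
        calc A * (z.1 * n0) ^ 6 = z.1 ^ 6 * (A * n0 ^ 6) := by rw [mul_pow]; ring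
          _ = C := by rw [z.2, h0, one_mul]⟩
      left_inv := fun n => by
        ext
        simp only
        rw [mul_assoc, hinv', mul_one]
      right_inv := fun z => by
        ext
        simp only
        rw [mul_assoc, hinv, mul_one] }
  rw [Nat.card_congr hEquiv, card_sixth_roots]

/-- the projection to `ZMod 9`. -/
def pi9 : ZMod (3 ^ (β + 2)) →+* ZMod 9 :=
  ZMod.castHom (show (9:ℕ) ∣ 3 ^ (β + 2) by
    rw [show (9:ℕ) = 3 ^ 2 by norm_num]; exact pow_dvd_pow 3 (by omega)) (ZMod 9)

lemma pi9_four : pi9 β (4 : ZMod (3 ^ (β + 2))) = 4 := by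
  have : ((4:ℕ) : ZMod (3^(β+2))) = 4 := by push_cast; rfl
  rw [← this, map_natCast]
  decide

lemma solvable_iff (a m : ℤ) (ha : ¬ (3:ℤ) ∣ a) (hm : ¬ (3:ℤ) ∣ m) :
    (∃ n : ZMod (3 ^ (β + 2)),
        (a : ZMod (3 ^ (β + 2))) * n ^ 6 = (m : ZMod (3 ^ (β + 2))) ^ 3) ↔
      ((a : ZMod 3) * (m : ZMod 3) = 1 ∧ ∃ X : ZMod 9, (a : ZMod 9) * X ^ 3 = 1) := by
  have h9 : ((9:ℕ):ℤ) = 3 ^ 2 := by norm_num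
  have hA0 : (a : ZMod 3) ≠ 0 := by
    rw [Ne, ZMod.intCast_zmod_eq_zero_iff_dvd]
    exact_mod_cast ha
  have hM0 : (m : ZMod 3) ≠ 0 := by
    rw [Ne, ZMod.intCast_zmod_eq_zero_iff_dvd]
    exact_mod_cast hm
  constructor
  · rintro ⟨n, hn⟩
    constructor
    · have h3 := congrArg (pi3 β) hn
      simp only [map_mul, map_pow, map_intCast] at h3
      revert h3
      revert hA0 hM0
      generalize (a : ZMod 3) = A
      generalize (m : ZMod 3) = M
      generalize (pi3 β n) = ν
      revert A M ν
      decide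
    · have h9' := congrArg (pi9 β) hn
      simp only [map_mul, map_pow, map_intCast] at h9'
      have hmu : IsUnit (m : ZMod 9) := isUnit_intCast_zmod m hm h9
      have hinv : (m : ZMod 9) * (m : ZMod 9)⁻¹ = 1 := ZMod.mul_inv_of_unit _ hmu
      refine ⟨(pi9 β n) ^ 2 * (m : ZMod 9)⁻¹, ?_⟩
      calc (a : ZMod 9) * ((pi9 β n) ^ 2 * (m : ZMod 9)⁻¹) ^ 3
          = ((a : ZMod 9) * (pi9 β n) ^ 6) * ((m : ZMod 9)⁻¹) ^ 3 := by ring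
        _ = (m : ZMod 9) ^ 3 * ((m : ZMod 9)⁻¹) ^ 3 := by rw [h9']
        _ = ((m : ZMod 9) * (m : ZMod 9)⁻¹) ^ 3 := by rw [mul_pow]
        _ = 1 := by rw [hinv, one_pow]
  · rintro ⟨h1, X, hX⟩
    have hNcast : ((3 ^ (β + 2) : ℕ) : ℤ) = 3 ^ (β + 2) := by push_cast; rfl
    have hau : IsUnit (a : ZMod (3 ^ (β + 2))) := isUnit_intCast_zmod a ha hNcast
    have hmu : IsUnit (m : ZMod (3 ^ (β + 2))) := isUnit_intCast_zmod m hm hNcast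
    obtain ⟨ea, A, hea, hAlt, hra⟩ := exists_repr β _ hau
    obtain ⟨em, M, hem, hMlt, hrm⟩ := exists_repr β _ hmu
    -- signs mod 3
    have ha3 : (a : ZMod 3) = (-1) ^ ea := by
      have := congrArg (pi3 β) hra
      simpa [map_intCast, map_mul, map_pow, pi3_four] using this
    have hm3 : (m : ZMod 3) = (-1) ^ em := by
      have := congrArg (pi3 β) hrm
      simpa [map_intCast, map_mul, map_pow, pi3_four] using this
    have hpar : ea % 2 = em % 2 := by
      rw [ha3, hm3, ← pow_add] at h1
      rcases Nat.even_or_odd (ea + em) with hpe | hpe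
      · rw [Nat.even_iff] at hpe; omega
      · exfalso
        rw [hpe.neg_one_pow] at h1
        revert h1; decide
    -- cube condition mod 9 forces 3 ∣ A
    have ha9 : (a : ZMod 9) = (-1) ^ ea * 4 ^ (A % 3) := by
      have := congrArg (pi9 β) hra
      rw [map_intCast, map_mul, map_pow, map_pow, pi9_four] at this
      rw [this, pow_mod_aux (4 : ZMod 9) (by decide : (4 : ZMod 9) ^ 3 = 1) A]
      simp
    have key : ∀ (r : Fin 3) (s y : ZMod 9), (s = 1 ∨ s = -1) →
        s * 4 ^ (r : ℕ) * y ^ 3 = 1 → r = 0 := by decide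
    have hsgn : ((-1 : ZMod 9)) ^ ea = 1 ∨ ((-1 : ZMod 9)) ^ ea = -1 := by
      rcases Nat.even_or_odd ea with hp | hp
      · left; exact hp.neg_one_pow
      · right; exact hp.neg_one_pow
    have hr0 : (⟨A % 3, Nat.mod_lt _ (by norm_num)⟩ : Fin 3) = 0 := by
      refine key _ ((-1)^ea) X hsgn ?_
      simp only [Fin.val_mk]
      rw [← ha9]
      exact hX
    have h3A : 3 ∣ A := by
      have := congrArg (Fin.val) hr0
      simpa using Nat.dvd_of_mod_eq_zero (by simpa using this)
    -- construct the solution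
    set P := 3 ^ β with hP
    have hPodd : 2 * ((P + 1) / 2) = P + 1 := by
      have h : Odd P := Odd.pow (by decide)
      rw [Nat.odd_iff] at h
      omega
    set c : ℕ := 3 * M + 3 * P - A with hc
    have hAle : A ≤ 3 * P := by
      have := hAlt
      rw [pow_succ'] at this
      omega
    have h3c : 3 ∣ c := by omega
    set c' : ℕ := c / 3 with hc'
    have e2 : 3 * c' = c := Nat.mul_div_cancel' h3c
    set h : ℕ := (P + 1) / 2 with hh
    set k : ℕ := c' * h with hk
    set D : ℕ := c' * P with hD
    have e3 : k * 6 = 3 * D + c := by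
      calc k * 6 = c' * (2 * h) * 3 := by rw [hk]; ring
        _ = c' * (P + 1) * 3 := by rw [hPodd]
        _ = 3 * (c' * P) + 3 * c' := by ring
        _ = 3 * D + c := by rw [← hD, e2]
    have heq : A + k * 6 = M * 3 + (3 * P) * (1 + c') := by
      have hexp : (3 * P) * (1 + c') = 3 * P + 3 * D := by rw [hD]; ring
      omega
    refine ⟨(4 : ZMod (3 ^ (β + 2))) ^ k, ?_⟩
    rw [hra, hrm]
    rw [← pow_mul, mul_assoc, ← pow_add, mul_pow, ← pow_mul, ← pow_mul]
    apply (repr_eq_iff β _ _ _ _).mpr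
    constructor
    · omega
    · rw [pow_succ', ← hP, heq]
      exact Nat.add_mul_mod_self_left (M * 3) (3 * P) (1 + c')

end

end Stmt4Aux


open Classical in
/-- For integers `a, m` coprime to `3`: the number of solutions `n mod 3` of
`a n^6 ≡ m^3 (mod 3)` is `2` if `a⁻¹ m` is a quadratic residue mod `3`
(equivalently `am ≡ 1 (mod 3)`) and `0` otherwise; for `α ≥ 2`, the number of
solutions mod `3^α` is `6` if `am ≡ 1 (mod 3)` and `a⁻¹` is a cubic residue
modulo `9` (equivalently `∃ x, a x³ ≡ 1 (mod 9)`), and `0` otherwise. -/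
theorem stmt_4 (a m : ℤ) (ha : ¬ (3 : ℤ) ∣ a) (hm : ¬ (3 : ℤ) ∣ m) :
    (rhoCount a m 3 = if a * m % 3 = 1 then 2 else 0) ∧
    ∀ α : ℕ, 2 ≤ α →
      rhoCount a m (3 ^ α) =
        if a * m % 3 = 1 ∧ ∃ x : ℤ, a * x ^ 3 ≡ 1 [ZMOD 9] then 6 else 0 := by
  have hA0 : (a : ZMod 3) ≠ 0 := by
    rw [Ne, ZMod.intCast_zmod_eq_zero_iff_dvd]
    exact_mod_cast ha
  have hM0 : (m : ZMod 3) ≠ 0 := by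
    rw [Ne, ZMod.intCast_zmod_eq_zero_iff_dvd]
    exact_mod_cast hm
  have trans1 : (a * m % 3 = 1) ↔ (a : ZMod 3) * (m : ZMod 3) = 1 := by
    rw [show ((a : ZMod 3) * (m : ZMod 3)) = ((a * m : ℤ) : ZMod 3) by push_cast; ring]
    rw [show (1 : ZMod 3) = ((1 : ℤ) : ZMod 3) by norm_num]
    rw [ZMod.intCast_eq_intCast_iff']
    norm_num
  have trans2 : (∃ x : ℤ, a * x ^ 3 ≡ 1 [ZMOD 9]) ↔ ∃ X : ZMod 9, (a : ZMod 9) * X ^ 3 = 1 := by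
    constructor
    · rintro ⟨x, hx⟩
      refine ⟨(x : ZMod 9), ?_⟩
      have := (ZMod.intCast_eq_intCast_iff _ _ _).mpr hx
      push_cast at this
      exact this
    · rintro ⟨X, hX⟩
      obtain ⟨x, rfl⟩ := ZMod.intCast_surjective X
      refine ⟨x, (ZMod.intCast_eq_intCast_iff _ _ _).mp ?_⟩
      push_cast
      exact hX
  constructor
  · have key : ∀ A M : ZMod 3, A ≠ 0 → M ≠ 0 →
        (Finset.univ.filter (fun n : ZMod 3 => A * n ^ 6 = M ^ 3)).card
          = if A * M = 1 then 2 else 0 := by decide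
    have hcount : rhoCount a m 3 = if (a : ZMod 3) * (m : ZMod 3) = 1 then 2 else 0 := by
      unfold rhoCount
      rw [Nat.card_eq_fintype_card, Fintype.card_subtype, key _ _ hA0 hM0]
    rw [hcount]
    by_cases hc : a * m % 3 = 1
    · rw [if_pos hc, if_pos (trans1.mp hc)]
    · rw [if_neg (fun h => hc (trans1.mpr h)), if_neg hc]
  · intro α hα
    obtain ⟨β, rfl⟩ : ∃ β, α = β + 2 := ⟨α - 2, by omega⟩
    haveI : NeZero (3 ^ (β + 2) : ℕ) := ⟨by positivity⟩
    by_cases hc : a * m % 3 = 1 ∧ ∃ x : ℤ, a * x ^ 3 ≡ 1 [ZMOD 9]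
    · rw [if_pos hc]
      have hNcast : ((3 ^ (β + 2) : ℕ) : ℤ) = 3 ^ (β + 2) := by push_cast; rfl
      have hmu : IsUnit ((m : ZMod (3 ^ (β + 2)))) := Stmt4Aux.isUnit_intCast_zmod m hm hNcast
      exact Stmt4Aux.card_solutions_eq_six β _ _ (Stmt4Aux.isUnit_intCast_zmod a ha hNcast) (hmu.pow 3)
        ((Stmt4Aux.solvable_iff β a m ha hm).mpr ⟨trans1.mp hc.1, trans2.mp hc.2⟩)
    · rw [if_neg hc]
      unfold rhoCount
      rw [Nat.card_eq_zero]
      left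
      rw [isEmpty_subtype]
      intro n hn
      exact hc ⟨trans1.mpr ((Stmt4Aux.solvable_iff β a m ha hm).mp ⟨n, hn⟩).1,
        trans2.mpr ((Stmt4Aux.solvable_iff β a m ha hm).mp ⟨n, hn⟩).2⟩
end

section
/- Let p ≥ 5 be prime and a, m integers with p ∤ am. For every α ≥ 1, the number of solutions n mod p^α to a n^6 ≡ m^3 (mod p^α) equals the number of solutions mod p, and this number equals ½(1 + χ₃)(1 + χ₂)(2 + ε), where χ₃ is 1 if a^{-1} is a cube mod p and −1 otherwise, χ₂ is the Legendre symbol (a^{-1}m / p), and ε is the Legendre symbol (−3/p). In particular it lies in {0, 2, 6}. -/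
open Polynomial in
private lemma countRoots {p : ℕ} [Fact p.Prime] {k : ℕ} (hk : 0 < k) {ζ : ZMod p}
    (hζ : IsPrimitiveRoot ζ k) {c : ZMod p} (hc : c ≠ 0) :
    Nat.card {n : ZMod p // n ^ k = c} = if ∃ α : ZMod p, α ^ k = c then k else 0 := by
  classical
  rw [Nat.card_eq_fintype_card, Fintype.card_subtype]
  have h1 : (Finset.univ.filter fun n : ZMod p => n ^ k = c) = (nthRoots k c).toFinset := by
    ext x
    simp [Polynomial.mem_nthRoots hk]
  rw [h1, Multiset.toFinset_card_of_nodup (hζ.nthRoots_nodup hc), hζ.card_nthRoots]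
  congr 1

private lemma isSquare_mul_sq_iff {F : Type*} [Field F] {b v : F} (hv : v ≠ 0) :
    IsSquare (b * v ^ 2) ↔ IsSquare b := by
  constructor
  · rintro ⟨s, hs⟩
    refine ⟨s / v, ?_⟩
    field_simp
    linear_combination hs
  · rintro ⟨s, hs⟩
    exact ⟨s * v, by rw [hs]; ring⟩

private lemma intCast_val_cast {Q : ℕ} [NeZero Q] (z : ZMod Q) : ((z.val : ℤ) : ZMod Q) = z := by
  push_cast
  exact ZMod.natCast_rightInverse z

private lemma two_not_square_mod3 : ¬ IsSquare (((2 : ℤ)) : ZMod 3) := by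
  rw [show (((2 : ℤ)) : ZMod 3) = 2 by norm_num]
  decide

private lemma one_square_mod3 : IsSquare (((1 : ℤ)) : ZMod 3) := by
  rw [show (((1 : ℤ)) : ZMod 3) = 1 by norm_num]
  exact IsSquare.one

open Classical in
private lemma rho_prime (p : ℕ) [hp : Fact p.Prime] (hp5 : 5 ≤ p) (a m : ℤ)
    (ha : ¬ (p : ℤ) ∣ a) (hm : ¬ (p : ℤ) ∣ m)
    (ainv : ℤ) (hainv : a * ainv ≡ 1 [ZMOD p])
    (χ₃ χ₂ ε : ℤ)
    (hχ₃ : χ₃ = if ∃ x : ℤ, x ^ 3 ≡ ainv [ZMOD p] then 1 else -1)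
    (hχ₂ : χ₂ = legendreSym p (ainv * m))
    (hε : ε = legendreSym p (-3)) :
    2 * (rhoCount a m p : ℤ) = (1 + χ₃) * (1 + χ₂) * (2 + ε) ∧
      rhoCount a m p ∈ ({0, 2, 6} : Set ℕ) := by
  classical
  have hp2 : p ≠ 2 := by omega
  have hp3 : p ≠ 3 := by omega
  have hodd : p % 2 = 1 := hp.out.eq_two_or_odd.resolve_left hp2
  have hA : (a : ZMod p) ≠ 0 := fun h => ha ((ZMod.intCast_zmod_eq_zero_iff_dvd a p).mp h)
  have hMm : (m : ZMod p) ≠ 0 := fun h => hm ((ZMod.intCast_zmod_eq_zero_iff_dvd m p).mp h)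
  have hAinv : (ainv : ZMod p) = (a : ZMod p)⁻¹ := by
    have h1 : (a : ZMod p) * (ainv : ZMod p) = 1 := by
      have h2 := (ZMod.intCast_eq_intCast_iff _ _ _).mpr hainv
      push_cast at h2
      exact h2
    exact (inv_eq_of_mul_eq_one_right h1).symm
  set c : ZMod p := (a : ZMod p)⁻¹ * (m : ZMod p) ^ 3 with hc
  have hcne : c ≠ 0 := mul_ne_zero (inv_ne_zero hA) (pow_ne_zero _ hMm)
  have hrho : rhoCount a m p = Nat.card {n : ZMod p // n ^ 6 = c} := by
    unfold rhoCount
    apply Nat.card_congr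
    apply Equiv.subtypeEquivRight
    intro n
    rw [hc]
    constructor
    · intro h
      rw [← h, ← mul_assoc, inv_mul_cancel₀ hA, one_mul]
    · intro h
      rw [h, ← mul_assoc, mul_inv_cancel₀ hA, one_mul]
  -- χ₂ translations
  have hamne : ((ainv * m : ℤ) : ZMod p) ≠ 0 := by
    push_cast
    rw [hAinv]
    exact mul_ne_zero (inv_ne_zero hA) hMm
  have hsq : IsSquare c ↔ IsSquare (((ainv * m : ℤ)) : ZMod p) := by
    have e1 : c = (((ainv * m : ℤ)) : ZMod p) * (m : ZMod p) ^ 2 := by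
      rw [hc]
      push_cast
      rw [hAinv]
      ring
    rw [e1, isSquare_mul_sq_iff hMm]
  have hχ₂1 : IsSquare c → χ₂ = 1 := fun h =>
    hχ₂ ▸ (legendreSym.eq_one_iff p hamne).mpr (hsq.mp h)
  have hχ₂n : ¬ IsSquare c → χ₂ = -1 := fun h =>
    hχ₂ ▸ (legendreSym.eq_neg_one_iff p).mpr (fun hs => h (hsq.mpr hs))
  -- χ₃ translation
  have hcube : (∃ x : ℤ, x ^ 3 ≡ ainv [ZMOD p]) ↔ ∃ y : ZMod p, y ^ 3 = c := by
    constructor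
    · rintro ⟨x, hx⟩
      refine ⟨(x : ZMod p) * (m : ZMod p), ?_⟩
      have hx' : ((x : ℤ) : ZMod p) ^ 3 = (ainv : ZMod p) := by
        have h2 := (ZMod.intCast_eq_intCast_iff _ _ _).mpr hx
        push_cast at h2
        exact h2
      rw [hc, ← hAinv, mul_pow, hx']
    · rintro ⟨y, hy⟩
      refine ⟨((y * (m : ZMod p)⁻¹).val : ℤ), ?_⟩
      rw [← ZMod.intCast_eq_intCast_iff]
      push_cast
      rw [ZMod.natCast_rightInverse (y * ((m : ZMod p))⁻¹), hAinv]
      rw [hc] at hy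
      rw [mul_pow, inv_pow, hy, mul_assoc, mul_inv_cancel₀ (pow_ne_zero 3 hMm), mul_one]
  rw [show (∃ x : ℤ, x ^ 3 ≡ ainv [ZMOD p]) = ∃ y : ZMod p, y ^ 3 = c from propext hcube] at hχ₃
  -- ε
  haveI f3 : Fact (Nat.Prime 3) := ⟨by norm_num⟩
  have hp3' : p % 3 = 1 ∨ p % 3 = 2 := by
    have h1 : ¬ (3 ∣ p) := fun h => hp3 ((Nat.prime_dvd_prime_iff_eq (by norm_num) hp.out).mp h).symm
    omega
  have hε' : ε = legendreSym 3 (p : ℤ) := by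
    rw [hε, show (-3 : ℤ) = -1 * 3 by norm_num, legendreSym.mul, legendreSym.at_neg_one hp2,
      ZMod.χ₄_eq_neg_one_pow hodd,
      show ((3 : ℤ)) = ((3 : ℕ) : ℤ) by norm_num,
      legendreSym.quadratic_reciprocity' (by norm_num) hp2]
    rw [show (3 / 2 : ℕ) = 1 by norm_num, one_mul, ← mul_assoc, ← pow_add]
    rw [Even.neg_one_pow ⟨p / 2, by ring⟩, one_mul]
  have hL3 : ε = (if p % 3 = 1 then 1 else -1) := by
    rw [hε', legendreSym.mod 3 (p : ℤ)]
    rcases hp3' with h | h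
    · rw [if_pos h, show ((p : ℤ) % (3 : ℕ)) = 1 by push_cast; omega]
      exact (legendreSym.eq_one_iff 3 (a := (1 : ℤ)) (by simp)).mpr one_square_mod3
    · rw [if_neg (by omega), show ((p : ℤ) % (3 : ℕ)) = 2 by push_cast; omega]
      exact (legendreSym.eq_neg_one_iff 3 (a := (2 : ℤ))).mpr two_not_square_mod3
  rcases hp3' with h1 | h2
  -- Case p % 3 = 1
  · have hdvd6 : 6 ∣ p - 1 := by omega
    obtain ⟨g, hg⟩ := IsCyclic.exists_generator (α := (ZMod p)ˣ)
    have hord : orderOf g = p - 1 := by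
      rw [orderOf_eq_card_of_forall_mem_zpowers hg, Nat.card_eq_fintype_card, ZMod.card_units]
    obtain ⟨k', hk'⟩ := hdvd6
    have hk'pos : 0 < k' := by omega
    have hordk : orderOf (g ^ k') = 6 := by
      rw [orderOf_pow, hord, hk', Nat.gcd_eq_right ⟨6, by ring⟩, Nat.mul_div_cancel _ hk'pos]
    have hζ : IsPrimitiveRoot ((g ^ k' : (ZMod p)ˣ) : ZMod p) 6 := by
      rw [IsPrimitiveRoot.coe_units_iff]
      have h := IsPrimitiveRoot.orderOf (g ^ k')
      rwa [hordk] at h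
    have hcount : rhoCount a m p = if ∃ α : ZMod p, α ^ 6 = c then 6 else 0 := by
      rw [hrho]
      exact countRoots (by norm_num) hζ hcne
    have hiff : (∃ α : ZMod p, α ^ 6 = c) ↔ (IsSquare c ∧ ∃ y : ZMod p, y ^ 3 = c) := by
      constructor
      · rintro ⟨α, hα⟩
        exact ⟨⟨α ^ 3, by rw [← hα]; ring⟩, ⟨α ^ 2, by rw [← hα]; ring⟩⟩
      · rintro ⟨⟨s, hs⟩, ⟨t, ht⟩⟩
        have htne : t ≠ 0 := fun h => hcne (by rw [← ht, h]; ring)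
        have e3 : s ^ 6 = c ^ 3 := by rw [hs]; ring
        have e4 : t ^ 6 = c ^ 2 := by rw [← ht]; ring
        refine ⟨s * t⁻¹, ?_⟩
        field_simp
        rw [e3, e4]
        ring
    rw [hL3, if_pos h1]
    by_cases hC : ∃ y : ZMod p, y ^ 3 = c
    · rw [if_pos hC] at hχ₃
      by_cases hS : IsSquare c
      · have h2 := hχ₂1 hS
        rw [hcount, if_pos (hiff.mpr ⟨hS, hC⟩), hχ₃, h2]
        norm_num
      · have h2 := hχ₂n hS
        rw [hcount, if_neg (fun hx => hS (hiff.mp hx).1), hχ₃, h2]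
        norm_num
    · rw [if_neg hC] at hχ₃
      rw [hcount, if_neg (fun hx => hC (hiff.mp hx).2), hχ₃]
      norm_num
  -- Case p % 3 = 2
  · have hcop : (Nat.card (ZMod p)ˣ).Coprime 3 := by
      rw [Nat.card_eq_fintype_card, ZMod.card_units]
      have h1 : ¬ (3 ∣ (p - 1)) := by omega
      exact Nat.coprime_comm.mp ((Nat.Prime.coprime_iff_not_dvd (by norm_num)).mpr h1)
    have cubeInj : ∀ u v : ZMod p, u ^ 3 = v ^ 3 → u = v := by
      intro u v huv
      rcases eq_or_ne v 0 with rfl | hv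
      · rw [show (0 : ZMod p) ^ 3 = 0 by ring, pow_eq_zero_iff (by norm_num)] at huv
        exact huv
      rcases eq_or_ne u 0 with rfl | hu
      · rw [show (0 : ZMod p) ^ 3 = 0 by ring] at huv
        exact (hv ((pow_eq_zero_iff (n := 3) (by norm_num)).mp huv.symm)).elim
      · have h2 : (powCoprime hcop) (Units.mk0 u hu) = (powCoprime hcop) (Units.mk0 v hv) := by
          simp only [powCoprime_apply]
          ext
          push_cast
          exact huv
        have h3 := (powCoprime hcop).injective h2
        have h4 := congrArg Units.val h3
        simpa using h4
    have cubeSurj : ∀ v : ZMod p, ∃ u : ZMod p, u ^ 3 = v := by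
      intro v
      rcases eq_or_ne v 0 with rfl | hv
      · exact ⟨0, by ring⟩
      obtain ⟨u, hu⟩ := (powCoprime hcop).surjective (Units.mk0 v hv)
      refine ⟨(u : ZMod p), ?_⟩
      have h2 := congrArg Units.val hu
      simp only [powCoprime_apply] at h2
      push_cast at h2
      simpa using h2
    obtain ⟨r, hr⟩ := cubeSurj c
    have hrne : r ≠ 0 := fun h => hcne (by rw [← hr, h]; ring)
    have hset : ∀ n : ZMod p, (n ^ 6 = c) ↔ (n ^ 2 = r) := by
      intro n
      constructor
      · intro h
        refine cubeInj _ _ ?_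
        rw [hr, ← h]
        ring
      · intro h
        rw [← hr, ← h]
        ring
    have hν : IsPrimitiveRoot (-1 : ZMod p) 2 := IsPrimitiveRoot.neg_one p hp2
    have hcount : rhoCount a m p = if ∃ α : ZMod p, α ^ 2 = r then 2 else 0 := by
      rw [hrho, Nat.card_congr (Equiv.subtypeEquivRight hset)]
      exact countRoots (by norm_num) hν hrne
    have hiff : (∃ α : ZMod p, α ^ 2 = r) ↔ IsSquare c := by
      constructor
      · rintro ⟨α, hα⟩
        exact ⟨α ^ 3, by rw [← hr, ← hα]; ring⟩
      · rintro ⟨s, hs⟩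
        obtain ⟨β, hβ⟩ := cubeSurj s
        refine ⟨β, cubeInj _ _ ?_⟩
        rw [hr, hs, ← hβ]
        ring
    rw [hL3, if_neg (by omega)]
    rw [if_pos (cubeSurj c)] at hχ₃
    by_cases hS : IsSquare c
    · have h2 := hχ₂1 hS
      rw [hcount, if_pos (hiff.mpr hS), hχ₃, h2]
      norm_num
    · have h2 := hχ₂n hS
      rw [hcount, if_neg (fun hx => hS (hiff.mp hx)), hχ₃, h2]
      norm_num

private lemma expand6 (a x h m3 : ℤ) :
    ∃ R : ℤ, a * (x + h) ^ 6 - m3 = (a * x ^ 6 - m3) + 6 * (a * x ^ 5) * h + h ^ 2 * R :=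
  ⟨a * (15*x^4 + 20*x^3*h + 15*x^2*h^2 + 6*x*h^3 + h^4), by ring⟩

private lemma rho_step (p : ℕ) [hp : Fact p.Prime] (hp5 : 5 ≤ p) (a m : ℤ)
    (ha : ¬ (p : ℤ) ∣ a) (hm : ¬ (p : ℤ) ∣ m) (k : ℕ) (hk : 1 ≤ k) :
    rhoCount a m (p ^ (k + 1)) = rhoCount a m (p ^ k) := by
  have hppos : 0 < p := hp.out.pos
  set M := p ^ (k + 1) with hM
  set N := p ^ k with hN
  have hdvd : N ∣ M := pow_dvd_pow p (Nat.le_succ k)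
  haveI : NeZero N := ⟨pow_ne_zero _ hppos.ne'⟩
  haveI : NeZero M := ⟨pow_ne_zero _ hppos.ne'⟩
  have hpZ : Prime (p : ℤ) := Nat.prime_iff_prime_int.mp hp.out
  have hpN : (p : ℤ) ∣ (N : ℤ) := by
    exact_mod_cast Int.natCast_dvd_natCast.mpr (dvd_pow_self p (by omega : k ≠ 0))
  have hMN : (M : ℤ) = (N : ℤ) * (p : ℤ) := by
    rw [hM, hN]; push_cast [pow_succ]; ring
  have hNM : (M : ℤ) ∣ (N : ℤ) ^ 2 := by
    have h1 : (p : ℤ) ^ (k + 1) ∣ (p : ℤ) ^ (k + k) := pow_dvd_pow _ (by omega)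
    have h2 : (N : ℤ) ^ 2 = (p : ℤ) ^ (k + k) := by rw [hN]; push_cast; ring
    have h3 : (M : ℤ) = (p : ℤ) ^ (k + 1) := by rw [hM]; push_cast; ring
    rw [h2, h3]; exact h1
  have hp6 : ¬ (p : ℤ) ∣ 6 := by
    intro h
    have h6 : (p : ℤ) ∣ 2 * 3 := by norm_num at h ⊢; exact h
    rcases hpZ.dvd_mul.mp h6 with h' | h' <;> have := Int.le_of_dvd (by norm_num) h' <;> omega
  have key : ∀ (Q : ℕ) (_ : NeZero Q) (x : ℤ),
      ((a : ZMod Q) * (x : ZMod Q) ^ 6 = (m : ZMod Q) ^ 3) ↔ (Q : ℤ) ∣ a * x ^ 6 - m ^ 3 := by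
    intro Q _ x
    rw [← ZMod.intCast_zmod_eq_zero_iff_dvd]
    constructor
    · intro h; push_cast; rw [sub_eq_zero]; exact h
    · intro h; push_cast at h; rw [sub_eq_zero] at h; exact h
  have hux : ∀ x : ℤ, (N : ℤ) ∣ a * x ^ 6 - m ^ 3 → ¬ (p : ℤ) ∣ x := by
    intro x hx hpx
    apply hm
    have h2 : (p : ℤ) ∣ a * x ^ 6 := Dvd.dvd.mul_left (dvd_pow hpx (by norm_num)) a
    have h3 : (p : ℤ) ∣ a * x ^ 6 - m ^ 3 := hpN.trans hx
    have h4 : (p : ℤ) ∣ m ^ 3 := by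
      have h5 := dvd_sub h2 h3
      have h6 : a * x ^ 6 - (a * x ^ 6 - m ^ 3) = m ^ 3 := by ring
      rwa [h6] at h5
    exact hpZ.dvd_of_dvd_pow h4
  have h6ax : ∀ x : ℤ, ¬ (p : ℤ) ∣ x → ¬ (p : ℤ) ∣ 6 * (a * x ^ 5) := by
    intro x hx h
    rcases hpZ.dvd_mul.mp h with h' | h'
    · exact hp6 h'
    rcases hpZ.dvd_mul.mp h' with h'' | h''
    · exact ha h''
    · exact hx (hpZ.dvd_of_dvd_pow h'')
  set φ : ZMod M →+* ZMod N := ZMod.castHom hdvd (ZMod N) with hφ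
  have hφint : ∀ x : ℤ, φ ((x : ZMod M)) = (x : ZMod N) := fun x => map_intCast φ x
  have fprop : ∀ n : ZMod M, (a : ZMod M) * n ^ 6 = (m : ZMod M) ^ 3 →
      (a : ZMod N) * (φ n) ^ 6 = (m : ZMod N) ^ 3 := by
    intro n hn
    have := congrArg φ hn
    simpa only [map_mul, map_pow, map_intCast] using this
  let f : {n : ZMod M // (a : ZMod M) * n ^ 6 = (m : ZMod M) ^ 3} →
      {n : ZMod N // (a : ZMod N) * n ^ 6 = (m : ZMod N) ^ 3} :=
    fun n => ⟨φ n.1, fprop n.1 n.2⟩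
  have finj : Function.Injective f := by
    rintro ⟨n₁, h₁⟩ ⟨n₂, h₂⟩ hf
    simp only [f, Subtype.mk.injEq] at hf ⊢
    have hrep1 : (((n₁.val : ℤ)) : ZMod M) = n₁ := intCast_val_cast n₁
    have hrep2 : (((n₂.val : ℤ)) : ZMod M) = n₂ := intCast_val_cast n₂
    set x : ℤ := (n₁.val : ℤ)
    set y : ℤ := (n₂.val : ℤ)
    have hx : (M : ℤ) ∣ a * x ^ 6 - m ^ 3 := (key M ‹_› x).mp (by rw [hrep1]; exact h₁)
    have hy : (M : ℤ) ∣ a * y ^ 6 - m ^ 3 := (key M ‹_› y).mp (by rw [hrep2]; exact h₂)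
    have hxy : (N : ℤ) ∣ y - x := by
      have hcast : (x : ZMod N) = (y : ZMod N) := by
        rw [← hφint, ← hφint, hrep1, hrep2]; exact hf
      exact Int.ModEq.dvd ((ZMod.intCast_eq_intCast_iff _ _ _).mp hcast)
    have hpx : ¬ (p : ℤ) ∣ x := hux x ((Int.natCast_dvd_natCast.mpr hdvd).trans hx)
    have hxyp : (p : ℤ) ∣ x - y := hpN.trans (dvd_sub_comm.mp hxy)
    set S : ℤ := a * (x^5 + x^4*y + x^3*y^2 + x^2*y^3 + x*y^4 + y^5) with hS
    have hMd : (M : ℤ) ∣ (x - y) * S := by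
      have h5 := dvd_sub hx hy
      have h6 : a * x ^ 6 - m ^ 3 - (a * y ^ 6 - m ^ 3) = (x - y) * S := by rw [hS]; ring
      rwa [h6] at h5
    have hyx : ((y : ℤ) : ZMod p) = ((x : ℤ) : ZMod p) :=
      (ZMod.intCast_eq_intCast_iff _ _ _).mpr (Int.modEq_iff_dvd.mpr hxyp)
    have hpaS : ¬ (p : ℤ) ∣ S := by
      intro h
      have h0 : ((S : ℤ) : ZMod p) = 0 := (ZMod.intCast_zmod_eq_zero_iff_dvd _ p).mpr h
      rw [hS] at h0
      push_cast at h0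
      rw [hyx] at h0
      have h1 : ((6 * (a * x ^ 5) : ℤ) : ZMod p) = 0 := by
        push_cast
        linear_combination h0
      exact h6ax x hpx ((ZMod.intCast_zmod_eq_zero_iff_dvd _ p).mp h1)
    have hcop : IsCoprime ((M : ℤ)) S := by
      have h1 : IsCoprime ((p : ℤ)) S := hpZ.coprime_iff_not_dvd.mpr hpaS
      have h2 : (M : ℤ) = (p : ℤ) ^ (k + 1) := by rw [hM]; push_cast; ring
      rw [h2]
      exact IsCoprime.pow_left h1
    have hMxy : (M : ℤ) ∣ x - y := hcop.dvd_of_dvd_mul_right hMd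
    have : (x : ZMod M) = (y : ZMod M) :=
      (ZMod.intCast_eq_intCast_iff _ _ _).mpr (Int.modEq_iff_dvd.mpr (dvd_sub_comm.mp hMxy))
    rw [hrep1, hrep2] at this
    exact this
  have fsurj : Function.Surjective f := by
    rintro ⟨n, hn⟩
    have hrepN : (((n.val : ℤ)) : ZMod N) = n := intCast_val_cast n
    set x : ℤ := (n.val : ℤ)
    have hx : (N : ℤ) ∣ a * x ^ 6 - m ^ 3 := (key N ‹_› x).mp (by rw [hrepN]; exact hn)
    obtain ⟨s, hs⟩ := hx
    have hpx : ¬ (p : ℤ) ∣ x := hux x ⟨s, hs⟩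
    have hne : ((6 * (a * x ^ 5) : ℤ) : ZMod p) ≠ 0 := fun h =>
      h6ax x hpx ((ZMod.intCast_zmod_eq_zero_iff_dvd _ p).mp h)
    set w : ZMod p := (-(s : ZMod p)) * (((6 * (a * x ^ 5) : ℤ) : ZMod p))⁻¹ with hw
    set t : ℤ := (w.val : ℤ) with ht
    have hwt : ((t : ℤ) : ZMod p) = w := intCast_val_cast w
    have hsol : (p : ℤ) ∣ s + 6 * (a * x ^ 5) * t := by
      rw [← ZMod.intCast_zmod_eq_zero_iff_dvd]
      have e1 : ((s + 6 * (a * x ^ 5) * t : ℤ) : ZMod p)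
          = (s : ZMod p) + ((6 * (a * x ^ 5) : ℤ) : ZMod p) * w := by
        rw [← hwt]; push_cast; ring
      rw [e1, hw]
      have e2 : ((6 * (a * x ^ 5) : ℤ) : ZMod p) *
          (-(s : ZMod p) * (((6 * (a * x ^ 5) : ℤ) : ZMod p))⁻¹) = -(s : ZMod p) := by
        rw [mul_comm, mul_assoc, inv_mul_cancel₀ hne, mul_one]
      rw [e2]; ring
    set y : ℤ := x + t * (N : ℤ) with hy
    obtain ⟨R, hR⟩ := expand6 a x (t * (N : ℤ)) (m ^ 3)
    obtain ⟨u, hu⟩ := hsol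
    obtain ⟨c₁, hc₁⟩ : (p : ℤ) ∣ (N : ℤ) := hpN
    have hyM : (M : ℤ) ∣ a * y ^ 6 - m ^ 3 := by
      rw [hy, hR, hs]
      refine ⟨u + t ^ 2 * c₁ * R, ?_⟩
      rw [hMN, hc₁]
      linear_combination ((p:ℤ) * c₁) * hu
    refine ⟨⟨((y : ℤ) : ZMod M), (key M ‹_› y).mpr hyM⟩, ?_⟩
    simp only [f, Subtype.mk.injEq]
    rw [hφint]
    have : ((y : ℤ) : ZMod N) = ((x : ℤ) : ZMod N) := by
      rw [ZMod.intCast_eq_intCast_iff]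
      apply Int.modEq_iff_dvd.mpr
      rw [hy]
      exact ⟨-t, by ring⟩
    rw [this, hrepN]
  exact Nat.card_eq_of_bijective f ⟨finj, fsurj⟩

open Classical in
/-- Let `p ≥ 5` be prime and `a, m` integers with `p ∤ am`.  For every `α ≥ 1`
the number of solutions of `a n^6 ≡ m^3 (mod p^α)` equals the number of
solutions mod `p`, and twice this number equals `(1 + χ₃)(1 + χ₂)(2 + ε)`,
where `χ₃ = 1` if `a⁻¹` is a cube mod `p` and `−1` otherwise, `χ₂` is the
Legendre symbol `(a⁻¹ m / p)`, and `ε = (−3/p)`.  In particular the count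
lies in `{0, 2, 6}`. -/
theorem stmt_5 (p : ℕ) [hp : Fact p.Prime] (hp5 : 5 ≤ p) (a m : ℤ)
    (ha : ¬ (p : ℤ) ∣ a) (hm : ¬ (p : ℤ) ∣ m)
    (ainv : ℤ) (hainv : a * ainv ≡ 1 [ZMOD p])
    (χ₃ χ₂ ε : ℤ)
    (hχ₃ : χ₃ = if ∃ x : ℤ, x ^ 3 ≡ ainv [ZMOD p] then 1 else -1)
    (hχ₂ : χ₂ = legendreSym p (ainv * m))
    (hε : ε = legendreSym p (-3)) :
    ∀ α : ℕ, 1 ≤ α →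
      rhoCount a m (p ^ α) = rhoCount a m p ∧
      2 * (rhoCount a m (p ^ α) : ℤ) = (1 + χ₃) * (1 + χ₂) * (2 + ε) ∧
      rhoCount a m (p ^ α) ∈ ({0, 2, 6} : Set ℕ) := by
  have hstep : ∀ β : ℕ, 1 ≤ β → rhoCount a m (p ^ β) = rhoCount a m p := by
    intro β hβ
    induction β with
    | zero => omega
    | succ n ih =>
      rcases Nat.lt_or_ge n 1 with hn | hn
      · have : n = 0 := by omega
        subst this
        rw [pow_one]
      · rw [rho_step p hp5 a m ha hm n hn, ih hn]
  intro α hα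
  obtain ⟨h2, h3⟩ := rho_prime p hp5 a m ha hm ainv hainv χ₃ χ₂ ε hχ₃ hχ₂ hε
  refine ⟨hstep α hα, ?_, ?_⟩
  · rw [hstep α hα]; exact h2
  · rw [hstep α hα]; exact h3
end

section
/- For any nonzero integers a, m with gcd(t, 6am) = 1 and t a positive integer, ρ_m^{(a)}(t²) ≤ 6^{ω(t)}, where ω(t) is the number of distinct prime factors of t. Consequently, for every ε > 0, ρ_m^{(a)}(t²) = O_ε(t^ε). -/
/-- Number of sixth roots of unity in `(ZMod M)ˣ`. -/
noncomputable def rootCount (M : ℕ) : ℕ := Nat.card {u : (ZMod M)ˣ // u ^ 6 = 1}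

lemma rootCount_prime_pow (p : ℕ) (hp : p.Prime) (n : ℕ) (hn : 0 < n)
    (hco : Nat.Coprime (p ^ n) 6) : rootCount (p ^ n) ≤ 6 := by
  haveI : Fact p.Prime := ⟨hp⟩
  haveI : NeZero (p ^ n) := ⟨pow_ne_zero _ hp.pos.ne'⟩
  set f : (ZMod (p ^ n))ˣ →* (ZMod p)ˣ := ZMod.unitsMap (dvd_pow_self p hn.ne') with hf
  have hsurj : Function.Surjective f := ZMod.unitsMap_surjective _
  -- cardinality of the kernel
  have hker : Nat.card f.ker = p ^ (n - 1) := by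
    have h1 : Nat.card (ZMod (p ^ n))ˣ = Nat.card (ZMod p)ˣ * Nat.card f.ker := by
      rw [Subgroup.card_eq_card_quotient_mul_card_subgroup f.ker,
        Nat.card_congr (QuotientGroup.quotientKerEquivOfSurjective f hsurj).toEquiv]
    rw [Nat.card_eq_fintype_card, Nat.card_eq_fintype_card,
      ZMod.card_units_eq_totient, ZMod.card_units_eq_totient,
      Nat.totient_prime_pow hp hn, Nat.totient_prime hp, mul_comm (p ^ (n-1))] at h1
    exact (Nat.eq_of_mul_eq_mul_left (Nat.sub_pos_of_lt hp.one_lt) h1).symm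
  have hcop : Nat.Coprime (p ^ (n - 1)) 6 := by
    have : Nat.Coprime p 6 := (Nat.coprime_pow_left_iff hn p 6).mp hco
    exact this.pow_left _
  -- injectivity of f on sixth roots of unity
  have hinj : ∀ u v : (ZMod (p ^ n))ˣ, u ^ 6 = 1 → v ^ 6 = 1 → f u = f v → u = v := by
    intro u v hu hv huv
    have hmem : u * v⁻¹ ∈ f.ker := by
      rw [MonoidHom.mem_ker, map_mul, map_inv, huv, mul_inv_cancel]
    set w : f.ker := ⟨u * v⁻¹, hmem⟩ with hw
    have hw6 : w ^ 6 = 1 := by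
      have huv6 : (u * v⁻¹) ^ 6 = 1 := by
        rw [mul_pow, inv_pow, hu, hv, inv_one, mul_one]
      exact Subtype.ext (by simpa using huv6)
    have hd6 : orderOf w ∣ 6 := orderOf_dvd_of_pow_eq_one hw6
    have hdp : orderOf w ∣ p ^ (n - 1) := hker ▸ orderOf_dvd_natCard w
    have : orderOf w = 1 := Nat.dvd_one.mp (hcop ▸ Nat.dvd_gcd hdp hd6)
    have hw1 : w = 1 := orderOf_eq_one_iff.mp this
    have : u * v⁻¹ = 1 := congrArg Subtype.val hw1
    exact mul_inv_eq_one.mp this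
  -- count sixth roots of unity in `(ZMod p)ˣ` (cyclic group)
  classical
  have htarget : Nat.card {v : (ZMod p)ˣ // v ^ 6 = 1} ≤ 6 := by
    rw [Nat.card_eq_fintype_card, Fintype.card_subtype]
    exact IsCyclic.card_pow_eq_one_le (by norm_num)
  refine le_trans ?_ htarget
  exact Nat.card_le_card_of_injective
    (fun u => ⟨f u.1, by rw [← map_pow, u.2, map_one]⟩)
    (fun u v huv => Subtype.ext (hinj u.1 v.1 u.2 v.2 (congrArg Subtype.val huv)))

lemma rootCount_mul (a b : ℕ) (ha : a ≠ 0) (hb : b ≠ 0) (hab : Nat.Coprime a b) :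
    rootCount (a * b) = rootCount a * rootCount b := by
  have e : (ZMod (a * b))ˣ ≃* (ZMod a)ˣ × (ZMod b)ˣ :=
    (Units.mapEquiv (ZMod.chineseRemainder hab).toMulEquiv).trans MulEquiv.prodUnits
  have e1 : {u : (ZMod (a * b))ˣ // u ^ 6 = 1} ≃
      {x : (ZMod a)ˣ × (ZMod b)ˣ // x ^ 6 = 1} :=
    Equiv.subtypeEquiv e.toEquiv (fun u => by
      constructor
      · intro h
        simp only [MulEquiv.toEquiv_eq_coe, EquivLike.coe_coe]
        rw [← map_pow, h, map_one]
      · intro h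
        simp only [MulEquiv.toEquiv_eq_coe, EquivLike.coe_coe] at h
        rw [← map_pow] at h
        exact e.injective (by rw [h, map_one]))
  have e2 : {x : (ZMod a)ˣ × (ZMod b)ˣ // x ^ 6 = 1} ≃
      {u : (ZMod a)ˣ // u ^ 6 = 1} × {v : (ZMod b)ˣ // v ^ 6 = 1} :=
    (Equiv.subtypeEquivRight (fun x => by
      simp [Prod.ext_iff, Prod.pow_fst, Prod.pow_snd])).trans
      (Equiv.subtypeProdEquivProd)
  rw [rootCount, Nat.card_congr (e1.trans e2), Nat.card_prod]
  rfl

lemma rootCount_le (M : ℕ) (hM : Nat.Coprime M 6) :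
    rootCount M ≤ 6 ^ M.primeFactors.card := by
  induction M using Nat.recOnPosPrimePosCoprime with
  | prime_pow p n hp hn =>
    rw [Nat.primeFactors_pow p hn.ne', hp.primeFactors, Finset.card_singleton, pow_one]
    exact rootCount_prime_pow p hp n hn hM
  | zero => simp [Nat.coprime_zero_left] at hM
  | one =>
    have : Nat.card {u : (ZMod 1)ˣ // u ^ 6 = 1} ≤ Nat.card (ZMod 1)ˣ :=
      Nat.card_le_card_of_injective Subtype.val Subtype.val_injective
    simpa [rootCount, Nat.primeFactors_one] using this.trans (by simp)
  | coprime a b ha hb hab iha ihb =>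
    have ha0 : a ≠ 0 := by omega
    have hb0 : b ≠ 0 := by omega
    have hca : Nat.Coprime a 6 := Nat.Coprime.coprime_dvd_left (dvd_mul_right a b) hM
    have hcb : Nat.Coprime b 6 := Nat.Coprime.coprime_dvd_left (dvd_mul_left b a) hM
    rw [rootCount_mul a b ha0 hb0 hab, Nat.primeFactors_mul ha0 hb0,
      Finset.card_union_of_disjoint hab.disjoint_primeFactors, pow_add]
    exact Nat.mul_le_mul (iha hca) (ihb hcb)

lemma isUnit_of_isCoprime_int {M : ℕ} {a : ℤ} (h : IsCoprime (M : ℤ) a) :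
    IsUnit (a : ZMod M) := by
  obtain ⟨x, y, hxy⟩ := h
  refine IsUnit.of_mul_eq_one ((y : ℤ) : ZMod M) ?_
  have h2 : ((x * M + y * a : ℤ) : ZMod M) = 1 := by rw [hxy]; push_cast; ring
  push_cast at h2
  rwa [ZMod.natCast_self, mul_zero, zero_add, mul_comm] at h2

lemma rho_le_rootCount (a m : ℤ) (M : ℕ) [NeZero M]
    (ha : IsUnit ((a : ZMod M))) (hm : IsUnit ((m : ZMod M))) :
    rhoCount a m M ≤ rootCount M := by
  rcases isEmpty_or_nonempty {n : ZMod M // (a : ZMod M) * n ^ 6 = (m : ZMod M) ^ 3} with hE | hN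
  · rw [rhoCount, Nat.card_of_isEmpty]; exact Nat.zero_le _
  · obtain ⟨⟨n₀, h₀⟩⟩ := hN
    have hunit : ∀ n : ZMod M, (a : ZMod M) * n ^ 6 = (m : ZMod M) ^ 3 → IsUnit n := by
      intro n hn
      have h3 : IsUnit ((m : ZMod M) ^ 3) := hm.pow 3
      rw [← hn] at h3
      have : IsUnit ((a : ZMod M) * n ^ 6) := h3
      exact (isUnit_pow_iff (by norm_num : (6:ℕ) ≠ 0)).mp (isUnit_of_mul_isUnit_right this)
    have hu₀ : IsUnit n₀ := hunit n₀ h₀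
    have key : ∀ (n : ZMod M) (hn : (a : ZMod M) * n ^ 6 = (m : ZMod M) ^ 3),
        ((hunit n hn).unit * hu₀.unit⁻¹) ^ 6 = 1 := by
      intro n hn
      have hpow : (hunit n hn).unit ^ 6 = hu₀.unit ^ 6 := by
        ext
        push_cast
        exact ha.mul_left_cancel (by simp only [IsUnit.unit_spec]; rw [hn, h₀])
      rw [mul_pow, hpow, inv_pow, mul_inv_cancel]
    refine Nat.card_le_card_of_injective
      (fun x => ⟨(hunit x.1 x.2).unit * hu₀.unit⁻¹, key x.1 x.2⟩) ?_
    intro x y hxy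
    have h1 : (hunit x.1 x.2).unit * hu₀.unit⁻¹ = (hunit y.1 y.2).unit * hu₀.unit⁻¹ :=
      congrArg Subtype.val hxy
    have h2 : (hunit x.1 x.2).unit = (hunit y.1 y.2).unit := mul_right_cancel h1
    exact Subtype.ext (by rw [← (hunit x.1 x.2).unit_spec, ← (hunit y.1 y.2).unit_spec, h2])

/-- The key arithmetic bound. -/
lemma rho_bound (a m : ℤ) (t : ℕ) (ht : 0 < t)
    (hg : Int.gcd (t : ℤ) (6 * a * m) = 1) :
    rhoCount a m (t ^ 2) ≤ 6 ^ t.primeFactors.card := by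
  haveI : NeZero (t ^ 2) := ⟨pow_ne_zero _ ht.ne'⟩
  have hco : IsCoprime ((t : ℤ)) (6 * a * m) := Int.isCoprime_iff_gcd_eq_one.mpr hg
  have hca : IsCoprime ((t : ℤ)) a := (IsCoprime.of_mul_right_left hco).of_mul_right_right
  have hcm : IsCoprime ((t : ℤ)) m := hco.of_mul_right_right
  have hc6 : IsCoprime ((t : ℤ)) 6 := (IsCoprime.of_mul_right_left hco).of_mul_right_left
  have hca2 : IsCoprime (((t ^ 2 : ℕ) : ℤ)) a := by push_cast; exact hca.pow_left
  have hcm2 : IsCoprime (((t ^ 2 : ℕ) : ℤ)) m := by push_cast; exact hcm.pow_left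
  have hn6 : Nat.Coprime (t ^ 2) 6 := by
    have h1 : Int.gcd (t : ℤ) ((6 : ℕ) : ℤ) = 1 := by
      rw [Int.isCoprime_iff_gcd_eq_one] at hc6
      simpa using hc6
    rw [Int.gcd_natCast_natCast] at h1
    exact Nat.Coprime.pow_left _ h1
  calc rhoCount a m (t ^ 2) ≤ rootCount (t ^ 2) :=
        rho_le_rootCount a m (t ^ 2) (isUnit_of_isCoprime_int hca2)
          (isUnit_of_isCoprime_int hcm2)
    _ ≤ 6 ^ (t ^ 2).primeFactors.card := rootCount_le _ hn6
    _ = 6 ^ t.primeFactors.card := by rw [Nat.primeFactors_pow t two_ne_zero]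

/-- `6^{ω(t)} = O_ε(t^ε)`. -/
lemma six_pow_omega_le (ε : ℝ) (hε : 0 < ε) :
    ∃ C : ℝ, 0 < C ∧ ∀ t : ℕ, 0 < t →
      (6 : ℝ) ^ t.primeFactors.card ≤ C * (t : ℝ) ^ ε := by
  classical
  set B : ℕ := ⌈(6 : ℝ) ^ (1 / ε)⌉₊ + 1 with hB
  refine ⟨6 ^ B, by positivity, fun t ht => ?_⟩
  set S := t.primeFactors with hS
  set S₁ := S.filter (fun p => p < B) with hS₁
  set S₂ := S.filter (fun p => ¬ p < B) with hS₂
  have hcard : S₁.card + S₂.card = S.card :=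
    Finset.card_filter_add_card_filter_not _
  have hsplit : (6 : ℝ) ^ S.card = 6 ^ S₁.card * 6 ^ S₂.card := by
    rw [← pow_add, hcard]
  have h1 : (6 : ℝ) ^ S₁.card ≤ 6 ^ B := by
    apply pow_le_pow_right₀ (by norm_num)
    calc S₁.card ≤ (Finset.range B).card := Finset.card_le_card (fun p hp => by
          simp only [hS₁, Finset.mem_filter] at hp
          exact Finset.mem_range.mpr hp.2)
      _ = B := Finset.card_range B
  have h2 : (6 : ℝ) ^ S₂.card ≤ (t : ℝ) ^ ε := by
    have hstep : (6 : ℝ) ^ S₂.card ≤ ∏ p ∈ S₂, (p : ℝ) ^ ε := by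
      rw [← Finset.prod_const]
      apply Finset.prod_le_prod (fun _ _ => by norm_num)
      intro p hp
      simp only [hS₂, Finset.mem_filter, not_lt] at hp
      have hpB : (6 : ℝ) ^ (1 / ε) ≤ (p : ℝ) := by
        calc (6 : ℝ) ^ (1 / ε) ≤ (⌈(6 : ℝ) ^ (1 / ε)⌉₊ : ℝ) := Nat.le_ceil _
          _ ≤ (p : ℝ) := by
              have : B ≤ p := hp.2
              have : (B : ℝ) ≤ (p : ℝ) := Nat.cast_le.mpr this
              have hBc : ((⌈(6 : ℝ) ^ (1 / ε)⌉₊ : ℕ) : ℝ) ≤ (B : ℝ) := by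
                rw [hB]; push_cast; linarith
              linarith
      calc (6 : ℝ) = ((6 : ℝ) ^ (1 / ε)) ^ ε := by
            rw [← Real.rpow_mul (by norm_num), one_div_mul_cancel hε.ne', Real.rpow_one]
        _ ≤ (p : ℝ) ^ ε := Real.rpow_le_rpow (Real.rpow_nonneg (by norm_num) _) hpB hε.le
    have hprod : ∏ p ∈ S₂, (p : ℝ) ^ ε = ((∏ p ∈ S₂, p : ℕ) : ℝ) ^ ε := by
      rw [Real.finset_prod_rpow S₂ _ (fun p _ => Nat.cast_nonneg p)]
      push_cast
      rfl
    have hdvd : (∏ p ∈ S₂, p) ∣ t := by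
      refine dvd_trans ?_ (Nat.prod_primeFactors_dvd t)
      exact Finset.prod_dvd_prod_of_subset _ _ _ (Finset.filter_subset _ _)
    have hle : ((∏ p ∈ S₂, p : ℕ) : ℝ) ≤ (t : ℝ) :=
      Nat.cast_le.mpr (Nat.le_of_dvd ht hdvd)
    calc (6 : ℝ) ^ S₂.card ≤ ∏ p ∈ S₂, (p : ℝ) ^ ε := hstep
      _ = ((∏ p ∈ S₂, p : ℕ) : ℝ) ^ ε := hprod
      _ ≤ (t : ℝ) ^ ε := Real.rpow_le_rpow (Nat.cast_nonneg _) hle hε.le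
  calc (6 : ℝ) ^ S.card = 6 ^ S₁.card * 6 ^ S₂.card := hsplit
    _ ≤ 6 ^ B * (t : ℝ) ^ ε := by
        apply mul_le_mul h1 h2 (by positivity) (by positivity)

/-- For nonzero integers `a, m` and a positive integer `t` with
`gcd(t, 6am) = 1`, one has `ρ_m^{(a)}(t²) ≤ 6^{ω(t)}`, where `ω(t)` is the
number of distinct prime factors of `t`; consequently, for every `ε > 0`
there is a constant `C = C(ε) > 0` with `ρ_m^{(a)}(t²) ≤ C · t^ε`. -/
theorem stmt_10 :
    (∀ (a m : ℤ), a ≠ 0 → m ≠ 0 → ∀ t : ℕ, 0 < t →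
      Int.gcd (t : ℤ) (6 * a * m) = 1 →
      rhoCount a m (t ^ 2) ≤ 6 ^ t.primeFactors.card) ∧
    (∀ ε : ℝ, 0 < ε → ∃ C : ℝ, 0 < C ∧
      ∀ (a m : ℤ), a ≠ 0 → m ≠ 0 → ∀ t : ℕ, 0 < t →
        Int.gcd (t : ℤ) (6 * a * m) = 1 →
        (rhoCount a m (t ^ 2) : ℝ) ≤ C * (t : ℝ) ^ ε) := by
  constructor
  · intro a m _ _ t ht hg
    exact rho_bound a m t ht hg
  · intro ε hε
    obtain ⟨C, hC, hbound⟩ := six_pow_omega_le ε hε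
    refine ⟨C, hC, fun a m _ _ t ht hg => ?_⟩
    calc (rhoCount a m (t ^ 2) : ℝ) ≤ ((6 ^ t.primeFactors.card : ℕ) : ℝ) :=
          Nat.cast_le.mpr (rho_bound a m t ht hg)
      _ = (6 : ℝ) ^ t.primeFactors.card := by push_cast; rfl
      _ ≤ C * (t : ℝ) ^ ε := hbound t ht
end
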